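/- Let v be a vertex of P stabbed by the ray r_θ from q whose two incident edges lie on opposite sides of the line through q and v. Then for all sufficiently small ε > 0, the edge list of r_{θ+ε} is obtained from the edge list of r_{θ-ε} by replacing one incident edge of v with the other incident edge of v, at the same position in the distance-ordered list. -/

import Mathlib

open Set

/-- A simple polygon in the plane, given by its cyclic sequence of vertices.
Non-adjacent edges are disjoint, and adjacent edges meet exactly in their
shared vertex. -/
structure SimplePolygon where
  n : ℕ
  three_le : 3 ≤ n
  vtx : ZMod n → ℝ × ℝ
  inj : Function.Injective vtx
  nondegenerate : ∀ i j : ZMod n, i ≠ j → i + 1 ≠ j → j + 1 ≠ i →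
    segment ℝ (vtx i) (vtx (i + 1)) ∩ segment ℝ (vtx j) (vtx (j + 1)) = ∅
  consecutive : ∀ i : ZMod n,
    segment ℝ (vtx i) (vtx (i + 1)) ∩ segment ℝ (vtx (i + 1)) (vtx (i + 1 + 1))
      = {vtx (i + 1)}

namespace SimplePolygon

variable (P : SimplePolygon)

/-- The `i`-th edge of the polygon, from vertex `i` to vertex `i+1`. -/
def edge (i : ZMod P.n) : Set (ℝ × ℝ) := segment ℝ (P.vtx i) (P.vtx (i + 1))

/-- The boundary `∂P` of the polygon: the union of its edges. -/
def boundary : Set (ℝ × ℝ) := ⋃ i : ZMod P.n, P.edge i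

/-- The interior of the polygon (Jordan): points off the boundary whose
connected component in the complement of the boundary is bounded. -/
def inside : Set (ℝ × ℝ) :=
  {x | x ∉ P.boundary ∧ Bornology.IsBounded (connectedComponentIn P.boundaryᶜ x)}

/-- The polygon as a region of the plane: interior together with boundary. -/
def region : Set (ℝ × ℝ) := P.inside ∪ P.boundary

/-- The set of (indices of) edges of `P` properly met by the open segment `qp`
(the endpoints `q`, `p` are not counted). -/
def crossSet (q p : ℝ × ℝ) : Set (ZMod P.n) :=
  {i | (openSegment ℝ q p ∩ P.edge i).Nonempty}

/-- The number of times the segment `qp` crosses the boundary of `P`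
(endpoints not counted). -/
noncomputable def crossCount (q p : ℝ × ℝ) : ℕ := (P.crossSet q p).ncard

/-- The k-visibility region `V_k(P,q)`: the points of `P` whose segment to `q`
crosses the boundary at most `k` times. -/
def vis (q : ℝ × ℝ) (k : ℕ) : Set (ℝ × ℝ) :=
  {p | p ∈ P.region ∧ P.crossCount q p ≤ k}

/-- No vertex of `P` lies on the segment `qp`. -/
def segAvoidsVtx (q p : ℝ × ℝ) : Prop := ∀ i : ZMod P.n, P.vtx i ∉ segment ℝ q p

/-- Weak general position: `q` lies on no line through two vertices of `P`. -/
def wgp (q : ℝ × ℝ) : Prop :=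
  ∀ i j : ZMod P.n, i ≠ j → ¬ Collinear ℝ ({q, P.vtx i, P.vtx j} : Set (ℝ × ℝ))

/-- Signed area test: positive iff `x` is strictly to the left of the ray `qv`. -/
noncomputable def cross2 (q v x : ℝ × ℝ) : ℝ :=
  (v.1 - q.1) * (x.2 - q.2) - (v.2 - q.2) * (x.1 - q.1)

/-- Vertex `i` is critical for `q`: both incident edges (i.e. both neighbouring
vertices) lie strictly on the same side of the line through `q` and `vtx i`. -/
def isCritical (q : ℝ × ℝ) (i : ZMod P.n) : Prop :=
  0 < cross2 q (P.vtx i) (P.vtx (i - 1)) * cross2 q (P.vtx i) (P.vtx (i + 1))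

/-- A start critical vertex: both incident edges to the left of ray `qv`. -/
def isStart (q : ℝ × ℝ) (i : ZMod P.n) : Prop :=
  0 < cross2 q (P.vtx i) (P.vtx (i - 1)) ∧ 0 < cross2 q (P.vtx i) (P.vtx (i + 1))

/-- An end critical vertex: both incident edges to the right of ray `qv`. -/
def isEnd (q : ℝ × ℝ) (i : ZMod P.n) : Prop :=
  cross2 q (P.vtx i) (P.vtx (i - 1)) < 0 ∧ cross2 q (P.vtx i) (P.vtx (i + 1)) < 0

/-- The unit vector of direction `θ`. -/
noncomputable def dir (θ : ℝ) : ℝ × ℝ := (Real.cos θ, Real.sin θ)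

/-- The ray `r_θ` from `q` in direction `θ`. -/
def rayFrom (q : ℝ × ℝ) (θ : ℝ) : Set (ℝ × ℝ) :=
  {x | ∃ t : ℝ, 0 ≤ t ∧ x = q + t • dir θ}

/-- The edge list of the ray `r_θ` (as a set of edge indices). -/
def hits (q : ℝ × ℝ) (θ : ℝ) : Set (ZMod P.n) :=
  {i | (rayFrom q θ ∩ P.edge i).Nonempty}

/-- The parameter (distance from `q`) at which the ray `r_θ` first meets edge `i`. -/
noncomputable def hitTime (q : ℝ × ℝ) (θ : ℝ) (i : ZMod P.n) : ℝ :=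
  sInf {t : ℝ | 0 ≤ t ∧ q + t • dir θ ∈ P.edge i}

/-- The position (rank) of edge `i` in the distance-ordered edge list of `r_θ`:
the number of hit edges met strictly earlier. -/
noncomputable def rank (q : ℝ × ℝ) (θ : ℝ) (i : ZMod P.n) : ℕ :=
  {j | j ∈ P.hits q θ ∧ P.hitTime q θ j < P.hitTime q θ i}.ncard

end SimplePolygon

open SimplePolygon



noncomputable def LL (q : ℝ × ℝ) (θ' : ℝ) (x : ℝ × ℝ) : ℝ :=
  Real.cos θ' * (x.2 - q.2) - Real.sin θ' * (x.1 - q.1)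

noncomputable def DD (q : ℝ × ℝ) (θ' : ℝ) (x : ℝ × ℝ) : ℝ :=
  Real.cos θ' * (x.1 - q.1) + Real.sin θ' * (x.2 - q.2)

lemma eq_ray_pt {q x : ℝ × ℝ} {θ' : ℝ} (h : LL q θ' x = 0) :
    x = q + (DD q θ' x) • SimplePolygon.dir θ' := by
  have hcs := Real.sin_sq_add_cos_sq θ'
  simp only [LL] at h
  ext
  · simp only [DD, SimplePolygon.dir, Prod.fst_add, Prod.smul_fst, smul_eq_mul]
    linear_combination (-(Real.sin θ')) * h - (x.1 - q.1) * hcs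
  · simp only [DD, SimplePolygon.dir, Prod.snd_add, Prod.smul_snd, smul_eq_mul]
    linear_combination Real.cos θ' * h - (x.2 - q.2) * hcs

lemma LL_ray (q : ℝ × ℝ) (θ' t : ℝ) : LL q θ' (q + t • SimplePolygon.dir θ') = 0 := by
  simp [LL, SimplePolygon.dir]; ring

lemma DD_ray (q : ℝ × ℝ) (θ' t : ℝ) : DD q θ' (q + t • SimplePolygon.dir θ') = t := by
  have hcs := Real.sin_sq_add_cos_sq θ'
  simp only [DD, SimplePolygon.dir, Prod.fst_add, Prod.smul_fst, Prod.snd_add, Prod.smul_snd, smul_eq_mul]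
  linear_combination t * hcs

lemma mem_ray_iff {q x : ℝ × ℝ} {θ' : ℝ} :
    x ∈ SimplePolygon.rayFrom q θ' ↔ LL q θ' x = 0 ∧ 0 ≤ DD q θ' x := by
  constructor
  · rintro ⟨t, ht, rfl⟩
    exact ⟨LL_ray q θ' t, by rw [DD_ray]; exact ht⟩
  · rintro ⟨h1, h2⟩
    exact ⟨DD q θ' x, h2, eq_ray_pt h1⟩

lemma LL_comb (q : ℝ × ℝ) (θ' : ℝ) (u w : ℝ × ℝ) (s : ℝ) :
    LL q θ' ((1 - s) • u + s • w) = (1 - s) * LL q θ' u + s * LL q θ' w := by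
  simp only [LL, Prod.fst_add, Prod.snd_add, Prod.smul_fst, Prod.smul_snd, smul_eq_mul]
  ring

noncomputable def sP (q : ℝ × ℝ) (θ' : ℝ) (u w : ℝ × ℝ) : ℝ :=
  LL q θ' u / (LL q θ' u - LL q θ' w)

noncomputable def pP (q : ℝ × ℝ) (θ' : ℝ) (u w : ℝ × ℝ) : ℝ × ℝ :=
  (1 - sP q θ' u w) • u + sP q θ' u w • w

noncomputable def tH (q : ℝ × ℝ) (θ' : ℝ) (u w : ℝ × ℝ) : ℝ :=
  DD q θ' (pP q θ' u w)

section cross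
variable {q u w : ℝ × ℝ} {θ' : ℝ}

lemma diff_ne (h : LL q θ' u * LL q θ' w < 0) : LL q θ' u - LL q θ' w ≠ 0 := by
  rcases mul_neg_iff.mp h with ⟨h1, h2⟩ | ⟨h1, h2⟩ <;> intro he <;> nlinarith

lemma comb_pos {a b s : ℝ} (ha : 0 < a) (hb : 0 < b) (hs0 : 0 ≤ s) (hs1 : s ≤ 1) :
    0 < (1 - s) * a + s * b := by
  rcases lt_or_eq_of_le hs1 with h | h
  · have : 0 < (1 - s) * a := mul_pos (by linarith) ha
    nlinarith [mul_nonneg hs0 hb.le]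
  · subst h; simpa using hb

lemma sP_mem (h : LL q θ' u * LL q θ' w < 0) : sP q θ' u w ∈ Ioo (0:ℝ) 1 := by
  unfold sP
  rcases mul_neg_iff.mp h with ⟨h1, h2⟩ | ⟨h1, h2⟩
  · constructor
    · exact div_pos h1 (by linarith)
    · rw [div_lt_one (by linarith)]; linarith
  · constructor
    · exact div_pos_of_neg_of_neg h1 (by linarith)
    · rw [div_lt_one_of_neg (by linarith)]; linarith

lemma pP_mem_segment (h : LL q θ' u * LL q θ' w < 0) : pP q θ' u w ∈ segment ℝ u w := by
  obtain ⟨h0, h1⟩ := sP_mem h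
  rw [segment_eq_image]
  exact ⟨sP q θ' u w, ⟨le_of_lt h0, le_of_lt h1⟩, rfl⟩

lemma LL_pP (h : LL q θ' u * LL q θ' w < 0) : LL q θ' (pP q θ' u w) = 0 := by
  rw [pP, LL_comb]
  have hd := diff_ne h
  field_simp [sP]
  have hs : sP q θ' u w * (LL q θ' u - LL q θ' w) = LL q θ' u := div_mul_cancel₀ _ hd
  linear_combination -hs

lemma pP_unique (h : LL q θ' u * LL q θ' w < 0) {x : ℝ × ℝ}
    (hx : x ∈ segment ℝ u w) (hLx : LL q θ' x = 0) : x = pP q θ' u w := by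
  rw [segment_eq_image] at hx
  obtain ⟨s, hs, rfl⟩ := hx
  have he : (1 - s) * LL q θ' u + s * LL q θ' w = 0 := by rw [← LL_comb]; exact hLx
  have hd := diff_ne h
  have : s = sP q θ' u w := by
    rw [sP, eq_div_iff hd]; linarith
  rw [this]; rfl

lemma ray_inter_seg_eq (h : LL q θ' u * LL q θ' w < 0)
    (hD : 0 ≤ DD q θ' (pP q θ' u w)) :
    SimplePolygon.rayFrom q θ' ∩ segment ℝ u w = {pP q θ' u w} := by
  ext x
  constructor
  · rintro ⟨hr, hs⟩
    exact pP_unique h hs (mem_ray_iff.mp hr).1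
  · rintro rfl
    exact ⟨mem_ray_iff.mpr ⟨LL_pP h, hD⟩, pP_mem_segment h⟩

lemma ray_inter_seg_empty_D (h : LL q θ' u * LL q θ' w < 0)
    (hD : DD q θ' (pP q θ' u w) < 0) :
    SimplePolygon.rayFrom q θ' ∩ segment ℝ u w = ∅ := by
  ext x
  simp only [mem_inter_iff, mem_empty_iff_false, iff_false, not_and]
  intro hr hs
  have := pP_unique h hs (mem_ray_iff.mp hr).1
  subst this
  exact absurd (mem_ray_iff.mp hr).2 (not_le.mpr hD)

lemma ray_inter_seg_empty_sign (h : 0 < LL q θ' u * LL q θ' w) :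
    SimplePolygon.rayFrom q θ' ∩ segment ℝ u w = ∅ := by
  ext x
  simp only [mem_inter_iff, mem_empty_iff_false, iff_false, not_and]
  intro hr hs
  have hLx : LL q θ' x = 0 := (mem_ray_iff.mp hr).1
  rw [segment_eq_image] at hs
  obtain ⟨s, ⟨hs0, hs1⟩, rfl⟩ := hs
  rw [LL_comb] at hLx
  rcases mul_pos_iff.mp h with ⟨h1, h2⟩ | ⟨h1, h2⟩
  · exact absurd hLx (ne_of_gt (comb_pos h1 h2 hs0 hs1))
  · have : 0 < (1 - s) * (-LL q θ' u) + s * (-LL q θ' w) :=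
      comb_pos (by linarith) (by linarith) hs0 hs1
    nlinarith

lemma pP_on_ray_line (h : LL q θ' u * LL q θ' w < 0) :
    pP q θ' u w = q + (tH q θ' u w) • SimplePolygon.dir θ' := eq_ray_pt (LL_pP h)

lemma hitSet_eq (h : LL q θ' u * LL q θ' w < 0) (hD : 0 ≤ tH q θ' u w) :
    {t : ℝ | 0 ≤ t ∧ q + t • SimplePolygon.dir θ' ∈ segment ℝ u w} = {tH q θ' u w} := by
  ext t
  simp only [mem_setOf_eq, mem_singleton_iff]
  constructor
  · rintro ⟨ht, hmem⟩
    have hx := pP_unique h hmem (LL_ray q θ' t)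
    have := congrArg (DD q θ') hx
    rwa [DD_ray] at this
  · rintro rfl
    exact ⟨hD, by rw [← pP_on_ray_line h]; exact pP_mem_segment h⟩

end cross

lemma cont_LL (q x : ℝ × ℝ) : Continuous (fun θ' => LL q θ' x) := by
  unfold LL; fun_prop

lemma contAt_sP {q u w : ℝ × ℝ} {θ : ℝ} (hd : LL q θ u - LL q θ w ≠ 0) :
    ContinuousAt (fun θ' => sP q θ' u w) θ :=
  ContinuousAt.div (cont_LL q u).continuousAt
    ((cont_LL q u).sub (cont_LL q w)).continuousAt hd

lemma contAt_tH {q u w : ℝ × ℝ} {θ : ℝ} (hd : LL q θ u - LL q θ w ≠ 0) :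
    ContinuousAt (fun θ' => tH q θ' u w) θ := by
  have hs : ContinuousAt (fun θ' => sP q θ' u w) θ := contAt_sP hd
  have he : (fun θ' => tH q θ' u w) = fun θ' =>
      Real.cos θ' * (((1 - sP q θ' u w) * u.1 + sP q θ' u w * w.1) - q.1)
      + Real.sin θ' * (((1 - sP q θ' u w) * u.2 + sP q θ' u w * w.2) - q.2) := by
    funext θ'
    simp [tH, DD, pP, Prod.fst_add, Prod.snd_add, Prod.smul_fst, Prod.smul_snd]
  rw [he]
  exact ContinuousAt.add
    (ContinuousAt.mul Real.continuous_cos.continuousAt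
      (ContinuousAt.sub (ContinuousAt.add
        (ContinuousAt.mul (continuousAt_const.sub hs) continuousAt_const)
        (hs.mul continuousAt_const)) continuousAt_const))
    (ContinuousAt.mul Real.continuous_sin.continuousAt
      (ContinuousAt.sub (ContinuousAt.add
        (ContinuousAt.mul (continuousAt_const.sub hs) continuousAt_const)
        (hs.mul continuousAt_const)) continuousAt_const))

lemma LL_vtx_on_ray (q : ℝ × ℝ) (θ θ' t₀ : ℝ) :
    LL q θ' (q + t₀ • SimplePolygon.dir θ) = t₀ * Real.sin (θ - θ') := by
  simp only [LL, SimplePolygon.dir, Prod.fst_add, Prod.snd_add, Prod.smul_fst, Prod.smul_snd,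
    smul_eq_mul, Real.sin_sub]
  ring

lemma sP_right {q u w : ℝ × ℝ} {θ : ℝ} (hu : LL q θ u ≠ 0) (hw : LL q θ w = 0) :
    sP q θ u w = 1 := by
  rw [sP, hw, sub_zero, div_self hu]

lemma sP_left {q u w : ℝ × ℝ} {θ : ℝ} (hu : LL q θ u = 0) (hw : LL q θ w ≠ 0) :
    sP q θ u w = 0 := by
  rw [sP, hu, zero_div]

lemma tH_right {q u w : ℝ × ℝ} {θ : ℝ} (hu : LL q θ u ≠ 0) (hw : LL q θ w = 0) :
    tH q θ u w = DD q θ w := by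
  rw [tH, pP, sP_right hu hw]; simp

lemma tH_left {q u w : ℝ × ℝ} {θ : ℝ} (hu : LL q θ u = 0) (hw : LL q θ w ≠ 0) :
    tH q θ u w = DD q θ u := by
  rw [tH, pP, sP_left hu hw]; simp



lemma assemble (P : SimplePolygon) (q : ℝ × ℝ) (θ₁ θ₂ : ℝ) (a b : ZMod P.n)
    (H : Set (ZMod P.n)) (t₀ ρ : ℝ) (τ : ZMod P.n → ℝ)
    (haH : a ∉ H) (hbH : b ∉ H)
    (hH1 : ∀ j ∈ H, j ∈ P.hits q θ₁ ∧ |P.hitTime q θ₁ j - τ j| < ρ)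
    (hH2 : ∀ j ∈ H, j ∈ P.hits q θ₂ ∧ |P.hitTime q θ₂ j - τ j| < ρ)
    (hmiss1 : ∀ j, j ∉ H → j ≠ a → j ≠ b → j ∉ P.hits q θ₁)
    (hmiss2 : ∀ j, j ∉ H → j ≠ a → j ≠ b → j ∉ P.hits q θ₂)
    (ha1 : a ∈ P.hits q θ₁) (hb1 : b ∉ P.hits q θ₁)
    (ha2 : a ∉ P.hits q θ₂) (hb2 : b ∈ P.hits q θ₂)
    (hta : |P.hitTime q θ₁ a - t₀| < ρ) (htb : |P.hitTime q θ₂ b - t₀| < ρ)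
    (hsep : ∀ j ∈ H, 2 * ρ ≤ |τ j - t₀|) :
    P.hits q θ₂ = insert b (P.hits q θ₁ \ {a}) ∧ P.rank q θ₁ a = P.rank q θ₂ b := by
  have e1 : P.hits q θ₁ = insert a H := by
    ext j
    constructor
    · intro hj
      by_cases hja : j = a
      · exact hja ▸ mem_insert a H
      by_cases hjH : j ∈ H
      · exact mem_insert_of_mem a hjH
      by_cases hjb : j = b
      · exact absurd (hjb ▸ hj) hb1
      · exact absurd hj (hmiss1 j hjH hja hjb)
    · rintro (rfl | hjH)
      · exact ha1
      · exact (hH1 j hjH).1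
  have e2 : P.hits q θ₂ = insert b H := by
    ext j
    constructor
    · intro hj
      by_cases hjb : j = b
      · exact hjb ▸ mem_insert b H
      by_cases hjH : j ∈ H
      · exact mem_insert_of_mem b hjH
      by_cases hja : j = a
      · exact absurd (hja ▸ hj) ha2
      · exact absurd hj (hmiss2 j hjH hja hjb)
    · rintro (rfl | hjH)
      · exact hb2
      · exact (hH2 j hjH).1
  constructor
  · rw [e1, e2, insert_diff_self_of_notMem haH]
  · have key : ∀ (θ' : ℝ) (c : ZMod P.n), P.hits q θ' = insert c H → c ∉ H →
        (∀ j ∈ H, |P.hitTime q θ' j - τ j| < ρ) → |P.hitTime q θ' c - t₀| < ρ →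
        {j | j ∈ P.hits q θ' ∧ P.hitTime q θ' j < P.hitTime q θ' c}
          = {j | j ∈ H ∧ τ j < t₀} := by
      intro θ' c he hcH hHt hct
      ext j
      simp only [mem_setOf_eq]
      constructor
      · rintro ⟨hj, hlt⟩
        rw [he] at hj
        rcases hj with rfl | hjH
        · exact absurd hlt (lt_irrefl _)
        · refine ⟨hjH, ?_⟩
          by_contra hle
          push_neg at hle
          have h1 := hHt j hjH
          have h2 := hsep j hjH
          rw [abs_of_nonneg (by linarith)] at h2
          rw [abs_lt] at h1 hct
          linarith
      · rintro ⟨hjH, hτ⟩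
        refine ⟨he ▸ mem_insert_of_mem c hjH, ?_⟩
        have h1 := hHt j hjH
        have h2 := hsep j hjH
        rw [abs_of_nonpos (by linarith)] at h2
        rw [abs_lt] at h1 hct
        linarith
    rw [SimplePolygon.rank, SimplePolygon.rank,
      key θ₁ a e1 haH (fun j hj => (hH1 j hj).2) hta,
      key θ₂ b e2 hbH (fun j hj => (hH2 j hj).2) htb]

/-- Sweeping over a non-critical vertex `vtx i` (its incident edges lie on
opposite sides of the line `q`–`vtx i`): for all sufficiently small `ε > 0`, the
edge list of `r_{θ+ε}` is obtained from that of `r_{θ-ε}` by replacing one of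
the two incident edges of the vertex by the other, at the same position in the
distance-ordered list. -/
theorem hits_swap_at_noncritical (P : SimplePolygon) (q : ℝ × ℝ)
    (hq : q ∈ P.inside) (hw : P.wgp q) (θ : ℝ) (i : ZMod P.n)
    (hstab : P.vtx i ∈ rayFrom q θ)
    (hnc : cross2 q (P.vtx i) (P.vtx (i - 1)) * cross2 q (P.vtx i) (P.vtx (i + 1)) < 0) :
    ∃ ε₀ > 0, ∀ ε : ℝ, 0 < ε → ε < ε₀ →
      ∃ a b : ZMod P.n, a ≠ b ∧ ({a, b} : Set (ZMod P.n)) = {i - 1, i} ∧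
        a ∈ P.hits q (θ - ε) ∧ b ∉ P.hits q (θ - ε) ∧
        P.hits q (θ + ε) = insert b (P.hits q (θ - ε) \ {a}) ∧
        P.rank q (θ - ε) a = P.rank q (θ + ε) b := by

  classical
  haveI : NeZero P.n := ⟨by have := P.three_le; omega⟩
  obtain ⟨t₀, ht₀0, hv⟩ := hstab
  have hqb : q ∉ P.boundary := hq.1
  have hqe : ∀ j, q ∉ P.edge j := fun j hj => hqb (mem_iUnion.mpr ⟨j, hj⟩)
  have hvi : P.vtx i ∈ P.edge i := left_mem_segment ℝ _ _
  have ht₀ : 0 < t₀ := by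
    rcases ht₀0.lt_or_eq with h | h
    · exact h
    · exfalso
      apply hqe i
      have hvq : P.vtx i = q := by rw [hv, ← h]; simp
      rwa [hvq] at hvi
  have hone : (1 : ZMod P.n) ≠ 0 := by
    haveI : Fact (1 < P.n) := ⟨by have := P.three_le; omega⟩
    exact one_ne_zero
  have hsub1 : i - 1 + 1 = i := by ring
  have him : i - 1 ≠ i := by
    intro h
    apply hone
    have h2 : i - 1 + 1 = i + 1 := by rw [h]
    rw [hsub1] at h2
    exact left_eq_add.mp h2
  have hii1 : i ≠ i + 1 := fun h => hone (left_eq_add.mp h)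
  have hLv : ∀ θ'' : ℝ, LL q θ'' (P.vtx i) = t₀ * Real.sin (θ - θ'') := fun θ'' => by
    rw [hv]; exact LL_vtx_on_ray q θ θ'' t₀
  have hLvθ : LL q θ (P.vtx i) = 0 := by rw [hLv θ]; simp
  have hDvθ : DD q θ (P.vtx i) = t₀ := by rw [hv]; exact DD_ray q θ t₀
  have hVL : ∀ j : ZMod P.n, j ≠ i → LL q θ (P.vtx j) ≠ 0 := by
    intro j hj hL0
    refine hw i j (Ne.symm hj) ?_
    rw [collinear_iff_of_mem (mem_insert q {P.vtx i, P.vtx j})]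
    refine ⟨dir θ, ?_⟩
    intro p hp
    simp only [mem_insert_iff, mem_singleton_iff] at hp
    rcases hp with rfl | rfl | rfl
    · exact ⟨0, by simp⟩
    · exact ⟨t₀, by rw [hv]; simp [add_comm]⟩
    · refine ⟨DD q θ (P.vtx j), ?_⟩
      nth_rewrite 1 [eq_ray_pt hL0]
      simp [add_comm]
  have hVe : ∀ j : ZMod P.n, j ≠ i - 1 → j ≠ i → P.vtx i ∉ P.edge j := by
    intro j hj1 hj2 hmem
    by_cases hji : j = i + 1
    · subst hji
      have hc := P.consecutive i
      have hm2 : P.vtx i ∈ segment ℝ (P.vtx i) (P.vtx (i+1)) ∩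
          segment ℝ (P.vtx (i+1)) (P.vtx (i+1+1)) := ⟨left_mem_segment ℝ _ _, hmem⟩
      rw [hc] at hm2
      exact hii1 (P.inj (mem_singleton_iff.mp hm2))
    · have hnd := P.nondegenerate i j (Ne.symm hj2) (fun h => hji h.symm)
        (fun h => hj1 (eq_sub_iff_add_eq.mpr h))
      have hm2 : P.vtx i ∈ segment ℝ (P.vtx i) (P.vtx (i+1)) ∩
          segment ℝ (P.vtx j) (P.vtx (j+1)) := ⟨left_mem_segment ℝ _ _, hmem⟩
      rw [hnd] at hm2
      exact hm2
  have hcmne : LL q θ (P.vtx (i-1)) ≠ 0 := hVL (i-1) him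
  have hcpne : LL q θ (P.vtx (i+1)) ≠ 0 := hVL (i+1) (fun h => hii1 h.symm)
  have hc : LL q θ (P.vtx (i-1)) * LL q θ (P.vtx (i+1)) < 0 := by
    have hcr : ∀ x, cross2 q (P.vtx i) x = t₀ * LL q θ x := by
      intro x
      simp only [cross2, LL, hv, SimplePolygon.dir, Prod.fst_add, Prod.snd_add,
        Prod.smul_fst, Prod.smul_snd, smul_eq_mul]
      ring
    rw [hcr, hcr] at hnc
    nlinarith [mul_pos ht₀ ht₀]
  have hHT : ∀ (θ'' : ℝ) (j : ZMod P.n),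
      LL q θ'' (P.vtx j) * LL q θ'' (P.vtx (j+1)) < 0 →
      0 ≤ tH q θ'' (P.vtx j) (P.vtx (j+1)) →
      P.hitTime q θ'' j = tH q θ'' (P.vtx j) (P.vtx (j+1)) := by
    intro θ'' j hp hD
    have hset : {t : ℝ | 0 ≤ t ∧ q + t • dir θ'' ∈ P.edge j}
        = {tH q θ'' (P.vtx j) (P.vtx (j+1))} := hitSet_eq hp hD
    show sInf {t : ℝ | 0 ≤ t ∧ q + t • dir θ'' ∈ P.edge j} = _
    rw [hset]
    exact csInf_singleton _
  have hhit : ∀ (θ'' : ℝ) (j : ZMod P.n),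
      LL q θ'' (P.vtx j) * LL q θ'' (P.vtx (j+1)) < 0 →
      0 ≤ tH q θ'' (P.vtx j) (P.vtx (j+1)) → j ∈ P.hits q θ'' := by
    intro θ'' j hp hD
    exact ⟨pP q θ'' (P.vtx j) (P.vtx (j+1)),
      mem_ray_iff.mpr ⟨LL_pP hp, hD⟩, pP_mem_segment hp⟩
  have hmiss : ∀ (θ'' : ℝ) (j : ZMod P.n),
      rayFrom q θ'' ∩ P.edge j = ∅ → j ∉ P.hits q θ'' := by
    intro θ'' j he h
    obtain ⟨x, hx⟩ := h
    exact notMem_empty x (he ▸ hx)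
  set H : Set (ZMod P.n) := P.hits q θ \ {i - 1, i} with hHdef
  have hiH : i ∉ H := fun h => h.2 (by simp)
  have hi1H : i - 1 ∉ H := fun h => h.2 (by simp)
  set τ : ZMod P.n → ℝ := fun j => tH q θ (P.vtx j) (P.vtx (j+1)) with hτdef
  have hHfact : ∀ j ∈ H,
      LL q θ (P.vtx j) * LL q θ (P.vtx (j+1)) < 0 ∧ 0 < τ j ∧ τ j ≠ t₀ := by
    intro j hj
    obtain ⟨hjh, hjni⟩ := hj
    have hj2 : j ≠ i := fun h => hjni (by simp [h])
    have hj1 : j ≠ i - 1 := fun h => hjni (by simp [h])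
    have hj1' : j + 1 ≠ i := fun h => hj1 (eq_sub_iff_add_eq.mpr h)
    obtain ⟨x, hxr, hxe⟩ := hjh
    have hLu := hVL j hj2
    have hLw := hVL (j+1) hj1'
    have hp : LL q θ (P.vtx j) * LL q θ (P.vtx (j+1)) < 0 := by
      rcases (mul_ne_zero hLu hLw).lt_or_gt with h | h
      · exact h
      · exfalso
        have hx0 : x ∈ (∅ : Set (ℝ × ℝ)) := by
          rw [← ray_inter_seg_empty_sign h]
          exact ⟨hxr, hxe⟩
        exact notMem_empty x hx0
    have hxp : x = pP q θ (P.vtx j) (P.vtx (j+1)) :=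
      pP_unique hp hxe (mem_ray_iff.mp hxr).1
    have hD0 : 0 ≤ τ j := by
      have h0 : 0 ≤ DD q θ (pP q θ (P.vtx j) (P.vtx (j+1))) :=
        hxp ▸ (mem_ray_iff.mp hxr).2
      exact h0
    have hpPq : pP q θ (P.vtx j) (P.vtx (j+1)) ≠ q := by
      intro h
      exact hqe j (h ▸ pP_mem_segment hp)
    have hDne : τ j ≠ 0 := by
      intro h
      apply hpPq
      rw [pP_on_ray_line hp, show tH q θ (P.vtx j) (P.vtx (j+1)) = (0:ℝ) from h]
      simp
    have hτt₀ : τ j ≠ t₀ := by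
      intro h
      apply hVe j hj1 hj2
      have hpv : pP q θ (P.vtx j) (P.vtx (j+1)) = P.vtx i := by
        rw [pP_on_ray_line hp, show tH q θ (P.vtx j) (P.vtx (j+1)) = t₀ from h, ← hv]
      exact hpv ▸ pP_mem_segment hp
    exact ⟨hp, lt_of_le_of_ne hD0 (Ne.symm hDne), hτt₀⟩
  set F : Finset (ZMod P.n) := Finset.univ.filter (fun j => j ∈ H) with hF
  set G : Finset ℝ := insert (t₀ / 2) (F.image (fun j => |τ j - t₀| / 2)) with hG
  have hGne : G.Nonempty := Finset.insert_nonempty _ _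
  set ρ := G.min' hGne with hρdef
  have hρpos : 0 < ρ := by
    rw [hρdef, Finset.lt_min'_iff]
    intro y hy
    rw [hG, Finset.mem_insert] at hy
    rcases hy with rfl | hy
    · linarith
    · obtain ⟨j, hjF, rfl⟩ := Finset.mem_image.mp hy
      have hjH : j ∈ H := (Finset.mem_filter.mp hjF).2
      have h1 := (hHfact j hjH).2.2
      have h2 : 0 < |τ j - t₀| := abs_pos.mpr (sub_ne_zero.mpr h1)
      linarith
  have hsep : ∀ j ∈ H, 2 * ρ ≤ |τ j - t₀| := by
    intro j hj
    have hmem : |τ j - t₀| / 2 ∈ G := by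
      rw [hG, Finset.mem_insert]
      exact Or.inr (Finset.mem_image.mpr
        ⟨j, Finset.mem_filter.mpr ⟨Finset.mem_univ j, hj⟩, rfl⟩)
    have := Finset.min'_le _ _ hmem
    linarith
  -- eventual facts for the two incident edges
  have hEva : ∀ᶠ θ'' in nhds θ,
      0 < tH q θ'' (P.vtx (i-1)) (P.vtx i) ∧
      |tH q θ'' (P.vtx (i-1)) (P.vtx i) - t₀| < ρ ∧
      (0 < LL q θ (P.vtx (i-1)) → 0 < LL q θ'' (P.vtx (i-1))) ∧
      (LL q θ (P.vtx (i-1)) < 0 → LL q θ'' (P.vtx (i-1)) < 0) := by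
    have hd : LL q θ (P.vtx (i-1)) - LL q θ (P.vtx i) ≠ 0 := by
      rw [hLvθ, sub_zero]; exact hcmne
    have hct := contAt_tH (q := q) (θ := θ) hd
    have hval : tH q θ (P.vtx (i-1)) (P.vtx i) = t₀ := by
      rw [tH_right hcmne hLvθ, hDvθ]
    have hvalpos : 0 < tH q θ (P.vtx (i-1)) (P.vtx i) := by rw [hval]; exact ht₀
    have h1 := Filter.Tendsto.eventually hct (eventually_gt_nhds hvalpos)
    have h2 := Filter.Tendsto.eventually hct
      (eventually_abs_sub_lt (tH q θ (P.vtx (i-1)) (P.vtx i)) hρpos)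
    simp only [hval] at h2
    have h3 : ∀ᶠ θ'' in nhds θ,
        (0 < LL q θ (P.vtx (i-1)) → 0 < LL q θ'' (P.vtx (i-1))) ∧
        (LL q θ (P.vtx (i-1)) < 0 → LL q θ'' (P.vtx (i-1)) < 0) := by
      rcases hcmne.lt_or_gt with h | h
      · have := Filter.Tendsto.eventually (cont_LL q (P.vtx (i-1))).continuousAt
          (eventually_lt_nhds h)
        filter_upwards [this] with θ'' h''
        exact ⟨fun hc' => absurd hc' (not_lt.mpr h.le), fun _ => h''⟩
      · have := Filter.Tendsto.eventually (cont_LL q (P.vtx (i-1))).continuousAt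
          (eventually_gt_nhds h)
        filter_upwards [this] with θ'' h''
        exact ⟨fun _ => h'', fun hc' => absurd hc' (not_lt.mpr h.le)⟩
    filter_upwards [h1, h2, h3] with θ'' a b c
    exact ⟨a, b, c.1, c.2⟩
  have hEvb : ∀ᶠ θ'' in nhds θ,
      0 < tH q θ'' (P.vtx i) (P.vtx (i+1)) ∧
      |tH q θ'' (P.vtx i) (P.vtx (i+1)) - t₀| < ρ ∧
      (0 < LL q θ (P.vtx (i+1)) → 0 < LL q θ'' (P.vtx (i+1))) ∧
      (LL q θ (P.vtx (i+1)) < 0 → LL q θ'' (P.vtx (i+1)) < 0) := by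
    have hd : LL q θ (P.vtx i) - LL q θ (P.vtx (i+1)) ≠ 0 := by
      rw [hLvθ, zero_sub]; exact neg_ne_zero.mpr hcpne
    have hct := contAt_tH (q := q) (θ := θ) hd
    have hval : tH q θ (P.vtx i) (P.vtx (i+1)) = t₀ := by
      rw [tH_left hLvθ hcpne, hDvθ]
    have hvalpos : 0 < tH q θ (P.vtx i) (P.vtx (i+1)) := by rw [hval]; exact ht₀
    have h1 := Filter.Tendsto.eventually hct (eventually_gt_nhds hvalpos)
    have h2 := Filter.Tendsto.eventually hct
      (eventually_abs_sub_lt (tH q θ (P.vtx i) (P.vtx (i+1))) hρpos)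
    simp only [hval] at h2
    have h3 : ∀ᶠ θ'' in nhds θ,
        (0 < LL q θ (P.vtx (i+1)) → 0 < LL q θ'' (P.vtx (i+1))) ∧
        (LL q θ (P.vtx (i+1)) < 0 → LL q θ'' (P.vtx (i+1)) < 0) := by
      rcases hcpne.lt_or_gt with h | h
      · have := Filter.Tendsto.eventually (cont_LL q (P.vtx (i+1))).continuousAt
          (eventually_lt_nhds h)
        filter_upwards [this] with θ'' h''
        exact ⟨fun hc' => absurd hc' (not_lt.mpr h.le), fun _ => h''⟩
      · have := Filter.Tendsto.eventually (cont_LL q (P.vtx (i+1))).continuousAt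
          (eventually_gt_nhds h)
        filter_upwards [this] with θ'' h''
        exact ⟨fun _ => h'', fun hc' => absurd hc' (not_lt.mpr h.le)⟩
    filter_upwards [h1, h2, h3] with θ'' a b c
    exact ⟨a, b, c.1, c.2⟩
  have hEvH : ∀ j : ZMod P.n, ∀ᶠ θ'' in nhds θ, j ∈ H →
      (LL q θ'' (P.vtx j) * LL q θ'' (P.vtx (j+1)) < 0 ∧
       0 < tH q θ'' (P.vtx j) (P.vtx (j+1)) ∧
       |tH q θ'' (P.vtx j) (P.vtx (j+1)) - τ j| < ρ) := by
    intro j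
    by_cases hjH : j ∈ H
    · obtain ⟨hp, hpos, _⟩ := hHfact j hjH
      have hd := diff_ne hp
      have hct := contAt_tH (q := q) (θ := θ) hd
      have h1 := Filter.Tendsto.eventually
        ((cont_LL q (P.vtx j)).mul (cont_LL q (P.vtx (j+1)))).continuousAt
        (eventually_lt_nhds hp)
      have h2 := Filter.Tendsto.eventually hct (eventually_gt_nhds hpos)
      have h3 := Filter.Tendsto.eventually hct
        (eventually_abs_sub_lt (tH q θ (P.vtx j) (P.vtx (j+1))) hρpos)
      filter_upwards [h1, h2, h3] with θ'' a b c
      exact fun _ => ⟨a, b, c⟩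
    · exact Filter.Eventually.of_forall (fun θ'' h => absurd h hjH)
  have hEvM : ∀ j : ZMod P.n, ∀ᶠ θ'' in nhds θ, (j ∉ H → j ≠ i - 1 → j ≠ i →
      rayFrom q θ'' ∩ P.edge j = ∅) := by
    intro j
    by_cases hcond : j ∉ H ∧ j ≠ i - 1 ∧ j ≠ i
    · obtain ⟨hjH, hj1, hj2⟩ := hcond
      have hjh : j ∉ P.hits q θ := fun h => hjH ⟨h, by simp [hj1, hj2]⟩
      have hLu := hVL j hj2
      have hLw := hVL (j+1) (fun h => hj1 (eq_sub_iff_add_eq.mpr h))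
      rcases (mul_ne_zero hLu hLw).lt_or_gt with hp | hp
      · have hD : tH q θ (P.vtx j) (P.vtx (j+1)) < 0 := by
          by_contra hD
          push_neg at hD
          exact hjh (hhit θ j hp hD)
        have hd := diff_ne hp
        have h1 := Filter.Tendsto.eventually
          ((cont_LL q (P.vtx j)).mul (cont_LL q (P.vtx (j+1)))).continuousAt
          (eventually_lt_nhds hp)
        have h2 := Filter.Tendsto.eventually (contAt_tH (q := q) (θ := θ) hd)
          (eventually_lt_nhds hD)
        filter_upwards [h1, h2] with θ'' a b _ _ _
        exact ray_inter_seg_empty_D a b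
      · have h1 := Filter.Tendsto.eventually
          ((cont_LL q (P.vtx j)).mul (cont_LL q (P.vtx (j+1)))).continuousAt
          (eventually_gt_nhds hp)
        filter_upwards [h1] with θ'' a _ _ _
        exact ray_inter_seg_empty_sign a
    · refine Filter.Eventually.of_forall (fun θ'' hA hB hC => absurd ⟨hA, hB, hC⟩ hcond)
  have hEv := (Filter.eventually_all.mpr hEvH).and
    ((Filter.eventually_all.mpr hEvM).and (hEva.and hEvb))
  rw [Metric.eventually_nhds_iff] at hEv
  obtain ⟨δ, hδpos, hδ⟩ := hEv
  refine ⟨min δ 3, lt_min hδpos (by norm_num), ?_⟩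
  intro ε hε0 hεlt
  have hεδ : ε < δ := lt_of_lt_of_le hεlt (min_le_left _ _)
  have hε3 : ε < 3 := lt_of_lt_of_le hεlt (min_le_right _ _)
  have hsin : 0 < Real.sin ε :=
    Real.sin_pos_of_pos_of_lt_pi hε0 (hε3.trans Real.pi_gt_three)
  have hd1 : dist (θ - ε) θ < δ := by
    rw [Real.dist_eq, show θ - ε - θ = -ε by ring, abs_neg, abs_of_pos hε0]
    exact hεδ
  have hd2 : dist (θ + ε) θ < δ := by
    rw [Real.dist_eq, show θ + ε - θ = ε by ring, abs_of_pos hε0]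
    exact hεδ
  obtain ⟨hJ1, hM1, hA1, hB1⟩ := hδ hd1
  obtain ⟨hJ2, hM2, hA2, hB2⟩ := hδ hd2
  have hLv1pos : 0 < LL q (θ - ε) (P.vtx i) := by
    rw [hLv, show θ - (θ - ε) = ε by ring]
    exact mul_pos ht₀ hsin
  have hLv2neg : LL q (θ + ε) (P.vtx i) < 0 := by
    rw [hLv, show θ - (θ + ε) = -ε by ring, Real.sin_neg]
    nlinarith
  have hH1 : ∀ j ∈ H, j ∈ P.hits q (θ - ε) ∧ |P.hitTime q (θ - ε) j - τ j| < ρ := by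
    intro j hj
    obtain ⟨hp, hpos, habs⟩ := hJ1 j hj
    exact ⟨hhit _ j hp hpos.le, by rw [hHT _ j hp hpos.le]; exact habs⟩
  have hH2 : ∀ j ∈ H, j ∈ P.hits q (θ + ε) ∧ |P.hitTime q (θ + ε) j - τ j| < ρ := by
    intro j hj
    obtain ⟨hp, hpos, habs⟩ := hJ2 j hj
    exact ⟨hhit _ j hp hpos.le, by rw [hHT _ j hp hpos.le]; exact habs⟩
  rcases mul_neg_iff.mp hc with ⟨hcmp, hcpn⟩ | ⟨hcmn, hcpp⟩
  · -- cm > 0, cp < 0 : a = i, b = i - 1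
    have hpA1 : LL q (θ-ε) (P.vtx i) * LL q (θ-ε) (P.vtx (i+1)) < 0 :=
      mul_neg_of_pos_of_neg hLv1pos (hB1.2.2.2 hcpn)
    have ha1 : i ∈ P.hits q (θ-ε) := hhit _ i hpA1 hB1.1.le
    have hta : |P.hitTime q (θ-ε) i - t₀| < ρ := by
      rw [hHT _ i hpA1 hB1.1.le]; exact hB1.2.1
    have hb1 : (i-1) ∉ P.hits q (θ-ε) := by
      apply hmiss
      have hp : 0 < LL q (θ-ε) (P.vtx (i-1)) * LL q (θ-ε) (P.vtx (i-1+1)) := by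
        rw [hsub1]; exact mul_pos (hA1.2.2.1 hcmp) hLv1pos
      exact ray_inter_seg_empty_sign hp
    have hpB2 : LL q (θ+ε) (P.vtx (i-1)) * LL q (θ+ε) (P.vtx (i-1+1)) < 0 := by
      rw [hsub1]; exact mul_neg_of_pos_of_neg (hA2.2.2.1 hcmp) hLv2neg
    have htB2 : 0 ≤ tH q (θ+ε) (P.vtx (i-1)) (P.vtx (i-1+1)) := by
      rw [hsub1]; exact hA2.1.le
    have hb2 : (i-1) ∈ P.hits q (θ+ε) := hhit _ (i-1) hpB2 htB2
    have htb : |P.hitTime q (θ+ε) (i-1) - t₀| < ρ := by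
      rw [hHT _ (i-1) hpB2 htB2, hsub1]
      exact hA2.2.1
    have ha2 : i ∉ P.hits q (θ+ε) :=
      hmiss _ i (ray_inter_seg_empty_sign
        (mul_pos_of_neg_of_neg hLv2neg (hB2.2.2.2 hcpn)))
    obtain ⟨hset, hrank⟩ := assemble P q (θ-ε) (θ+ε) i (i-1) H t₀ ρ τ hiH hi1H
      hH1 hH2
      (fun j hj hja hjb => hmiss _ j (hM1 j hj hjb hja))
      (fun j hj hja hjb => hmiss _ j (hM2 j hj hjb hja))
      ha1 hb1 ha2 hb2 hta htb hsep
    exact ⟨i, i-1, Ne.symm him, pair_comm i (i-1), ha1, hb1, hset, hrank⟩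
  · -- cm < 0, cp > 0 : a = i - 1, b = i
    have hpA1 : LL q (θ-ε) (P.vtx (i-1)) * LL q (θ-ε) (P.vtx (i-1+1)) < 0 := by
      rw [hsub1]; exact mul_neg_of_neg_of_pos (hA1.2.2.2 hcmn) hLv1pos
    have htA1 : 0 ≤ tH q (θ-ε) (P.vtx (i-1)) (P.vtx (i-1+1)) := by
      rw [hsub1]; exact hA1.1.le
    have ha1 : (i-1) ∈ P.hits q (θ-ε) := hhit _ (i-1) hpA1 htA1
    have hta : |P.hitTime q (θ-ε) (i-1) - t₀| < ρ := by
      rw [hHT _ (i-1) hpA1 htA1, hsub1]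
      exact hA1.2.1
    have hb1 : i ∉ P.hits q (θ-ε) :=
      hmiss _ i (ray_inter_seg_empty_sign
        (mul_pos hLv1pos (hB1.2.2.1 hcpp)))
    have hpB2 : LL q (θ+ε) (P.vtx i) * LL q (θ+ε) (P.vtx (i+1)) < 0 :=
      mul_neg_of_neg_of_pos hLv2neg (hB2.2.2.1 hcpp)
    have hb2 : i ∈ P.hits q (θ+ε) := hhit _ i hpB2 hB2.1.le
    have htb : |P.hitTime q (θ+ε) i - t₀| < ρ := by
      rw [hHT _ i hpB2 hB2.1.le]; exact hB2.2.1
    have ha2 : (i-1) ∉ P.hits q (θ+ε) := by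
      apply hmiss
      have hp : 0 < LL q (θ+ε) (P.vtx (i-1)) * LL q (θ+ε) (P.vtx (i-1+1)) := by
        rw [hsub1]; exact mul_pos_of_neg_of_neg (hA2.2.2.2 hcmn) hLv2neg
      exact ray_inter_seg_empty_sign hp
    obtain ⟨hset, hrank⟩ := assemble P q (θ-ε) (θ+ε) (i-1) i H t₀ ρ τ hi1H hiH
      hH1 hH2
      (fun j hj hja hjb => hmiss _ j (hM1 j hj hja hjb))
      (fun j hj hja hjb => hmiss _ j (hM2 j hj hja hjb))
      ha1 hb1 ha2 hb2 hta htb hsep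
    exact ⟨i-1, i, him, rfl, ha1, hb1, hset, hrank⟩
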